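/- Let μ, t ∈ ℝ and σ > 0. If X is a symmetric random variable with mean μ and variance σ² and t > μ, then E[(X−t)₊²] < σ²/2 strictly; moreover the value σ²/2 is approached by three-point symmetric distributions [μ − √(σ²/(2ε)), ε; μ, 1−2ε; μ + √(σ²/(2ε)), ε] as ε → 0, so sup over 𝓛_S(μ,σ) equals σ²/2 and is not attained. -/

import Mathlib

open MeasureTheory Set Filter

lemma myIntegrable_dirac {f : ℝ → ℝ} (hf : Measurable f) (a : ℝ) :
    Integrable f (Measure.dirac a) :=
  ⟨hf.aestronglyMeasurable, by
    rw [HasFiniteIntegral, lintegral_dirac]; exact ENNReal.coe_lt_top⟩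

lemma integral_three {f : ℝ → ℝ} (hf : Measurable f) {c d : ℝ} (hc : 0 ≤ c) (hd : 0 ≤ d)
    (x y z : ℝ) :
    ∫ w, f w ∂(ENNReal.ofReal c • Measure.dirac x + ENNReal.ofReal d • Measure.dirac y
      + ENNReal.ofReal c • Measure.dirac z) = c * f x + d * f y + c * f z := by
  have h1 : Integrable f (ENNReal.ofReal c • Measure.dirac x) :=
    (myIntegrable_dirac hf x).smul_measure ENNReal.ofReal_ne_top
  have h2 : Integrable f (ENNReal.ofReal d • Measure.dirac y) :=
    (myIntegrable_dirac hf y).smul_measure ENNReal.ofReal_ne_top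
  have h3 : Integrable f (ENNReal.ofReal c • Measure.dirac z) :=
    (myIntegrable_dirac hf z).smul_measure ENNReal.ofReal_ne_top
  rw [integral_add_measure (h1.add_measure h2) h3, integral_add_measure h1 h2,
    integral_smul_measure, integral_smul_measure, integral_smul_measure,
    integral_dirac, integral_dirac, integral_dirac,
    ENNReal.toReal_ofReal hc, ENNReal.toReal_ofReal hd]
  simp [smul_eq_mul]


open MeasureTheory

def symTSVSet (μ σ t : ℝ) : Set ℝ :=
  {y : ℝ | ∃ P : Measure ℝ, IsProbabilityMeasure P ∧ Integrable (fun x => x ^ 2) P ∧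
    (∃ a : ℝ, ∀ x : ℝ, P {z | a + x < z} = P {z | z < a - x}) ∧
    (∫ x, x ∂P) = μ ∧ (∫ x, x ^ 2 ∂P) = μ ^ 2 + σ ^ 2 ∧
    y = ∫ x, (max (x - t) 0) ^ 2 ∂P}

lemma key_lt (μ σ t : ℝ) (hσ : 0 < σ) (ht : μ < t) :
    ∀ y ∈ symTSVSet μ σ t, y < σ ^ 2 / 2 := by
  rintro y ⟨P, hP, hInt2, ⟨a, hsym⟩, hmean, hvar, hy⟩
  have hIoi : ∀ b, P (Ioi b) = P (Iio (2 * a - b)) := by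
    intro b
    have := hsym (b - a)
    have h1 : {z : ℝ | a + (b - a) < z} = Ioi b := by
      ext z; simp only [Set.mem_setOf_eq, Set.mem_Ioi]; constructor <;> intro <;> linarith
    have h2 : {z : ℝ | z < a - (b - a)} = Iio (2 * a - b) := by
      ext z; simp only [Set.mem_setOf_eq, Set.mem_Iio]; constructor <;> intro <;> linarith
    rwa [h1, h2] at this
  have hIci : ∀ b, P (Ici b) = P (Iic (2 * a - b)) := by
    intro b
    have h1 : P (Iio b) = P (Ioi (2 * a - b)) := by
      rw [hIoi (2 * a - b)]; norm_num
    have e1 : Ici b = (Iio b)ᶜ := by simp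
    have e2 : Iic (2 * a - b) = (Ioi (2 * a - b))ᶜ := by simp
    rw [e1, e2, measure_compl measurableSet_Iio (measure_ne_top _ _),
      measure_compl measurableSet_Ioi (measure_ne_top _ _), h1]
  -- the reflection map
  set T : ℝ → ℝ := fun x => 2 * a - x with hT_def
  have hT : Measurable T := measurable_const.sub measurable_id
  have hmap : Measure.map T P = P := by
    haveI : IsProbabilityMeasure (Measure.map T P) := Measure.isProbabilityMeasure_map hT.aemeasurable
    refine Measure.ext_of_Iic _ _ (fun b => ?_)
    rw [Measure.map_apply hT measurableSet_Iic]
    have e : T ⁻¹' Iic b = Ici (2 * a - b) := by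
      ext x; simp only [hT_def, Set.mem_preimage, Set.mem_Iic, Set.mem_Ici]
      constructor <;> intro <;> linarith
    rw [e, hIci]
    norm_num
  have hInt1 : Integrable (fun x : ℝ => x) P := by
    have h0 : Integrable (fun x : ℝ => 1 + x ^ 2) P := (integrable_const 1).add hInt2
    refine h0.mono measurable_id.aestronglyMeasurable (ae_of_all _ fun x => ?_)
    simp only [Real.norm_eq_abs, id]
    nlinarith [abs_nonneg x, sq_abs x, abs_nonneg (1 + x^2), le_abs_self (1 + x^2)]
  -- a = μ
  have ha : a = μ := by
    have h1 : ∫ x, x ∂P = ∫ x, T x ∂P := by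
      conv_lhs => rw [← hmap]
      exact integral_map hT.aemeasurable measurable_id.aestronglyMeasurable
    have h2 : ∫ x, T x ∂P = 2 * a - μ := by
      simp only [hT_def]
      rw [integral_sub (integrable_const _) hInt1, integral_const, hmean]
      simp
    rw [hmean, h2] at h1
    linarith
  subst ha
  -- the two half-variances
  set q : ℝ → ℝ := fun x => (x - a) ^ 2 with hq_def
  have hq_meas : Measurable q := (measurable_id.sub measurable_const).pow measurable_const
  have hq_int : Integrable q P := by
    have h0 : Integrable (fun x => x ^ 2 - 2 * a * x + a ^ 2) P :=
      (hInt2.sub (hInt1.const_mul (2 * a))).add (integrable_const _)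
    exact h0.congr (ae_of_all _ fun x => by simp only [hq_def]; ring)
  have hq_val : ∫ x, q x ∂P = σ ^ 2 := by
    have : ∫ x, q x ∂P = ∫ x, (x ^ 2 - 2 * a * x + a ^ 2) ∂P :=
      integral_congr_ae (ae_of_all _ fun x => by simp only [hq_def]; ring)
    have hI3 : Integrable (fun x : ℝ => x ^ 2 - 2 * a * x) P := by
      have h4 := hInt2.sub (hInt1.const_mul (2 * a))
      exact h4.congr (ae_of_all _ fun x => rfl)
    rw [this, integral_add hI3 (integrable_const _),
      integral_sub hInt2 (hInt1.const_mul (2 * a)), integral_const_mul, hmean, hvar,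
      integral_const, probReal_univ]
    simp
    ring
  set g : ℝ → ℝ := (Ioi a).indicator q with hg_def
  set h : ℝ → ℝ := (Iio a).indicator q with hh_def
  have hg_meas : Measurable g := hq_meas.indicator measurableSet_Ioi
  have hg_int : Integrable g P := hq_int.indicator measurableSet_Ioi
  have hh_int : Integrable h P := hq_int.indicator measurableSet_Iio
  have hgh : ∀ x, g x + h x = q x := by
    intro x
    simp only [hg_def, hh_def, Set.indicator_apply, Set.mem_Ioi, Set.mem_Iio]
    rcases lt_trichotomy x a with hx | hx | hx
    · rw [if_neg (by linarith), if_pos hx]; ring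
    · rw [if_neg (by linarith), if_neg (by linarith)]; simp [hq_def, hx]
    · rw [if_pos hx, if_neg (by linarith)]; ring
  have hgT : ∀ x, g (T x) = h x := by
    intro x
    simp only [hg_def, hh_def, hT_def, Set.indicator_apply, Set.mem_Ioi, Set.mem_Iio]
    by_cases hx : x < a
    · rw [if_pos (by linarith), if_pos hx]; simp only [hq_def]; ring
    · rw [if_neg (by intro hc; exact hx (by linarith)), if_neg hx]
  have hg_eq_h : ∫ x, g x ∂P = ∫ x, h x ∂P := by
    have h1 : ∫ x, g x ∂P = ∫ x, g (T x) ∂P := by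
      conv_lhs => rw [← hmap]
      exact integral_map hT.aemeasurable hg_meas.aestronglyMeasurable
    rw [h1]
    exact integral_congr_ae (ae_of_all _ fun x => hgT x)
  have hg_val : ∫ x, g x ∂P = σ ^ 2 / 2 := by
    have h1 : ∫ x, g x ∂P + ∫ x, h x ∂P = σ ^ 2 := by
      rw [← integral_add hg_int hh_int, ← hq_val]
      exact integral_congr_ae (ae_of_all _ fun x => hgh x)
    linarith [hg_eq_h]
  -- the target function
  set f : ℝ → ℝ := fun x => (max (x - t) 0) ^ 2 with hf_def
  have hf_meas : Measurable f :=
    ((measurable_id.sub measurable_const).max measurable_const).pow measurable_const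
  have hf_nonneg : ∀ x, 0 ≤ f x := fun x => sq_nonneg _
  have hg_nonneg : ∀ x, 0 ≤ g x := fun x =>
    Set.indicator_nonneg (fun x _ => sq_nonneg _) x
  have hfg : ∀ x, f x ≤ g x := by
    intro x
    by_cases hx : a < x
    · have h1 : g x = (x - a) ^ 2 := by
        simp only [hg_def, Set.indicator_apply, Set.mem_Ioi, if_pos hx, hq_def]
      rw [h1]
      have h2 : max (x - t) 0 ≤ x - a := by
        apply max_le (by linarith) (by linarith)
      exact pow_le_pow_left₀ (le_max_right _ _) h2 2
    · have h1 : g x = 0 := by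
        simp only [hg_def, Set.indicator_apply, Set.mem_Ioi, if_neg hx]
      have h2 : max (x - t) 0 = 0 := max_eq_right (by push_neg at hx; linarith)
      have h3 : f x = 0 := by simp [hf_def, h2]
      rw [h1, h3]
  have hf_int : Integrable f P := by
    refine hg_int.mono hf_meas.aestronglyMeasurable (ae_of_all _ fun x => ?_)
    rw [Real.norm_eq_abs, Real.norm_eq_abs, abs_of_nonneg (hf_nonneg x),
      abs_of_nonneg (hg_nonneg x)]
    exact hfg x
  set d : ℝ → ℝ := fun x => g x - f x with hd_def
  have hd_nonneg : 0 ≤ d := fun x => by simp only [hd_def, Pi.zero_apply]; linarith [hfg x]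
  have hd_int : Integrable d P := hg_int.sub hf_int
  have hd_pos_on : ∀ x, a < x → 0 < d x := by
    intro x hx
    simp only [hd_def, hf_def]
    have h1 : g x = (x - a) ^ 2 := by
      simp only [hg_def, Set.indicator_apply, Set.mem_Ioi, if_pos hx, hq_def]
    rw [h1]
    have h2 : max (x - t) 0 < x - a := by
      rcases le_or_gt t x with hc | hc
      · rw [max_eq_left (by linarith)]; linarith
      · rw [max_eq_right (by linarith)]; linarith
    nlinarith [le_max_right (x - t) (0:ℝ)]
  have hd_ne : ∫ x, d x ∂P ≠ 0 := by
    intro hzero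
    have hae : d =ᵐ[P] 0 := (integral_eq_zero_iff_of_nonneg hd_nonneg hd_int).mp hzero
    have hnull : P {x | d x ≠ 0} = 0 := by
      have := hae
      rw [Filter.EventuallyEq, ae_iff] at this
      simpa using this
    have hIoi0 : P (Ioi a) = 0 := by
      refine measure_mono_null (fun x hx => ?_) hnull
      exact ne_of_gt (hd_pos_on x hx)
    have hIio0 : P (Iio a) = 0 := by
      have := hIoi a
      have e : (2 * a - a) = a := by ring
      rw [e] at this
      rw [← this]; exact hIoi0
    have hcompl : P ({a}ᶜ) = 0 := by
      have e : ({a}ᶜ : Set ℝ) = Iio a ∪ Ioi a := by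
        ext x
        simp only [Set.mem_compl_iff, Set.mem_singleton_iff, Set.mem_union, Set.mem_Iio,
          Set.mem_Ioi]
        exact ne_iff_lt_or_gt
      rw [e]; exact measure_union_null hIio0 hIoi0
    have hae_eq : ∀ᵐ x ∂P, x = a := by
      rw [ae_iff]
      have e2 : {x : ℝ | ¬ x = a} = ({a}ᶜ : Set ℝ) := by ext x; simp
      rw [e2]; exact hcompl
    have : ∫ x, q x ∂P = 0 := by
      rw [integral_congr_ae (g := fun _ => (0:ℝ)) (hae_eq.mono fun x hx => by
        simp [hq_def, hx])]
      simp
    rw [hq_val] at this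
    nlinarith
  have hd_nn : 0 ≤ ∫ x, d x ∂P := integral_nonneg hd_nonneg
  have hd_pos : 0 < ∫ x, d x ∂P := lt_of_le_of_ne hd_nn (Ne.symm hd_ne)
  have hsplit : ∫ x, d x ∂P = ∫ x, g x ∂P - ∫ x, f x ∂P := integral_sub hg_int hf_int
  rw [hy]
  show (∫ x, f x ∂P) < σ ^ 2 / 2
  linarith [hsplit, hg_val, hd_pos]

section parts23
variable (μ σ t : ℝ)

noncomputable def P3 (μ σ : ℝ) (ε : ℝ) : Measure ℝ :=
  ENNReal.ofReal ε • Measure.dirac (μ - Real.sqrt (σ ^ 2 / (2 * ε)))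
    + ENNReal.ofReal (1 - 2 * ε) • Measure.dirac μ
    + ENNReal.ofReal ε • Measure.dirac (μ + Real.sqrt (σ ^ 2 / (2 * ε)))

lemma fmeas (t : ℝ) : Measurable (fun x : ℝ => (max (x - t) 0) ^ 2) :=
  ((measurable_id.sub measurable_const).max measurable_const).pow measurable_const

lemma es_sq {σ ε : ℝ} (hσ : 0 < σ) (hε : 0 < ε) :
    ε * Real.sqrt (σ ^ 2 / (2 * ε)) ^ 2 = σ ^ 2 / 2 := by
  rw [Real.sq_sqrt (by positivity)]
  field_simp

lemma es_lin {σ ε : ℝ} (hσ : 0 < σ) (hε : 0 < ε) :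
    ε * Real.sqrt (σ ^ 2 / (2 * ε)) = Real.sqrt (ε * σ ^ 2 / 2) := by
  rw [show ε * Real.sqrt (σ ^ 2 / (2 * ε))
      = Real.sqrt (ε ^ 2) * Real.sqrt (σ ^ 2 / (2 * ε)) by rw [Real.sqrt_sq hε.le],
    ← Real.sqrt_mul (by positivity)]
  congr 1
  field_simp

lemma P3_integral (hσ : 0 < σ) (ht : μ < t) {ε : ℝ} (hε : 0 < ε) (hε2 : ε < 1 / 2)
    (hεs : ε ≤ σ ^ 2 / (2 * (t - μ) ^ 2)) :
    ∫ x, (max (x - t) 0) ^ 2 ∂(P3 μ σ ε)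
      = σ ^ 2 / 2 - 2 * (t - μ) * Real.sqrt (ε * σ ^ 2 / 2) + (t - μ) ^ 2 * ε := by
  set s := Real.sqrt (σ ^ 2 / (2 * ε)) with hs_def
  have hs_nonneg : 0 ≤ s := Real.sqrt_nonneg _
  have hst : t - μ ≤ s := by
    rw [hs_def, show t - μ = Real.sqrt ((t - μ) ^ 2) from (Real.sqrt_sq (by linarith)).symm]
    apply Real.sqrt_le_sqrt
    have hq : (0:ℝ) < (t - μ) ^ 2 := pow_pos (by linarith) 2
    have h' : ε * (2 * (t - μ) ^ 2) ≤ σ ^ 2 := by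
      rw [le_div_iff₀ (by linarith)] at hεs; linarith
    rw [le_div_iff₀ (by positivity)]
    nlinarith
  rw [P3, integral_three (fmeas t) hε.le (by linarith) _ _ _]
  have h1 : max (μ - s - t) 0 = 0 := max_eq_right (by linarith)
  have h2 : max (μ - t) 0 = 0 := max_eq_right (by linarith)
  have h3 : max (μ + s - t) 0 = μ + s - t := max_eq_left (by linarith)
  rw [h1, h2, h3]
  have e1 := es_sq hσ hε
  have e2 := es_lin hσ hε
  rw [← hs_def] at e1 e2
  nlinarith [e1, e2]

lemma part2 (hσ : 0 < σ) (ht : μ < t) :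
    Tendsto (fun ε : ℝ => ∫ x, (max (x - t) 0) ^ 2 ∂(P3 μ σ ε))
      (nhdsWithin 0 (Set.Ioi 0)) (nhds (σ ^ 2 / 2)) := by
  have hG : Tendsto (fun ε : ℝ =>
      σ ^ 2 / 2 - 2 * (t - μ) * Real.sqrt (ε * σ ^ 2 / 2) + (t - μ) ^ 2 * ε)
      (nhdsWithin 0 (Set.Ioi 0)) (nhds (σ ^ 2 / 2)) := by
    have h1 : Tendsto (fun ε : ℝ => Real.sqrt (ε * σ ^ 2 / 2)) (nhds 0) (nhds 0) := by
      have hc : Continuous fun ε : ℝ => Real.sqrt (ε * σ ^ 2 / 2) := by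
        apply Real.continuous_sqrt.comp; continuity
      have := hc.tendsto 0
      simpa using this
    have h2 : Tendsto (fun ε : ℝ =>
        σ ^ 2 / 2 - 2 * (t - μ) * Real.sqrt (ε * σ ^ 2 / 2) + (t - μ) ^ 2 * ε)
        (nhds 0) (nhds (σ ^ 2 / 2 - 2 * (t - μ) * 0 + (t - μ) ^ 2 * 0)) :=
      (tendsto_const_nhds.sub (h1.const_mul _)).add (tendsto_id.const_mul _)
    have h3 : σ ^ 2 / 2 - 2 * (t - μ) * 0 + (t - μ) ^ 2 * 0 = σ ^ 2 / 2 := by ring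
    rw [h3] at h2
    exact h2.mono_left nhdsWithin_le_nhds
  apply hG.congr'
  have hq : (0:ℝ) < (t - μ) ^ 2 := pow_pos (by linarith) 2
  have hδ : (0:ℝ) < min (1 / 2) (σ ^ 2 / (2 * (t - μ) ^ 2)) :=
    lt_min (by norm_num) (div_pos (by positivity) (by linarith))
  have hmem : Set.Ioo (0:ℝ) (min (1 / 2) (σ ^ 2 / (2 * (t - μ) ^ 2)))
      ∈ nhdsWithin (0:ℝ) (Set.Ioi 0) := Ioo_mem_nhdsGT_of_mem ⟨le_refl _, hδ⟩
  filter_upwards [hmem] with ε hε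
  exact (P3_integral μ σ t hσ ht hε.1 (lt_of_lt_of_le hε.2 (min_le_left _ _))
    (le_of_lt (lt_of_lt_of_le hε.2 (min_le_right _ _)))).symm

lemma P3_mem (hσ : 0 < σ) (ht : μ < t) {ε : ℝ} (hε : 0 < ε) (hε2 : ε < 1 / 2) :
    (∫ x, (max (x - t) 0) ^ 2 ∂(P3 μ σ ε)) ∈ symTSVSet μ σ t := by
  set s := Real.sqrt (σ ^ 2 / (2 * ε)) with hs_def
  have hε2' : (0:ℝ) ≤ 1 - 2 * ε := by linarith
  refine ⟨P3 μ σ ε, ?_, ?_, ⟨μ, ?_⟩, ?_, ?_, rfl⟩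
  · constructor
    rw [P3]
    simp only [Measure.add_apply, Measure.smul_apply, smul_eq_mul, measure_univ, mul_one]
    rw [← ENNReal.ofReal_add hε.le hε2', ← ENNReal.ofReal_add (by linarith) hε.le]
    rw [show ε + (1 - 2 * ε) + ε = 1 by ring]
    norm_num
  · exact (((myIntegrable_dirac (by measurability) _).smul_measure
        ENNReal.ofReal_ne_top).add_measure ((myIntegrable_dirac (by measurability) _).smul_measure
        ENNReal.ofReal_ne_top)).add_measure ((myIntegrable_dirac (by measurability) _).smul_measure
        ENNReal.ofReal_ne_top)
  · intro x
    have e1 : {z : ℝ | μ + x < z} = Ioi (μ + x) := rfl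
    have e2 : {z : ℝ | z < μ - x} = Iio (μ - x) := rfl
    rw [e1, e2, P3]
    simp only [Measure.add_apply, Measure.smul_apply, smul_eq_mul,
      Measure.dirac_apply, Set.indicator_apply, Set.mem_Ioi, Set.mem_Iio, Pi.one_apply]
    have hA : (if μ + x < μ - s then (1:ENNReal) else 0) = if μ + s < μ - x then 1 else 0 := by
      apply if_congr _ rfl rfl; constructor <;> intro <;> linarith
    have hB : (if μ + x < μ then (1:ENNReal) else 0) = if μ < μ - x then 1 else 0 := by
      apply if_congr _ rfl rfl; constructor <;> intro <;> linarith
    have hC : (if μ + x < μ + s then (1:ENNReal) else 0) = if μ - s < μ - x then 1 else 0 := by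
      apply if_congr _ rfl rfl; constructor <;> intro <;> linarith
    rw [hA, hB, hC]
    ring
  · rw [P3, integral_three (f := fun x : ℝ => x) measurable_id hε.le hε2' _ _ _]
    ring
  · rw [P3, integral_three (f := fun x : ℝ => x ^ 2) (measurable_id.pow measurable_const) hε.le hε2' _ _ _]
    have e1 : ε * s ^ 2 = σ ^ 2 / 2 := es_sq hσ hε
    nlinarith [e1]
end parts23
theorem stmt_4 (μ σ t : ℝ) (hσ : 0 < σ) (ht : μ < t) :
    (∀ y ∈ symTSVSet μ σ t, y < σ ^ 2 / 2) ∧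
    Filter.Tendsto (fun ε : ℝ =>
        ∫ x, (max (x - t) 0) ^ 2
          ∂(ENNReal.ofReal ε • Measure.dirac (μ - Real.sqrt (σ ^ 2 / (2 * ε)))
            + ENNReal.ofReal (1 - 2 * ε) • Measure.dirac μ
            + ENNReal.ofReal ε • Measure.dirac (μ + Real.sqrt (σ ^ 2 / (2 * ε)))))
      (nhdsWithin 0 (Set.Ioi 0)) (nhds (σ ^ 2 / 2)) ∧
    sSup (symTSVSet μ σ t) = σ ^ 2 / 2 ∧
    σ ^ 2 / 2 ∉ symTSVSet μ σ t := by
  have hub : ∀ y ∈ symTSVSet μ σ t, y ≤ σ ^ 2 / 2 :=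
    fun y hy => (key_lt μ σ t hσ ht y hy).le
  have hbdd : BddAbove (symTSVSet μ σ t) := ⟨σ ^ 2 / 2, hub⟩
  refine ⟨key_lt μ σ t hσ ht, part2 μ σ t hσ ht, ?_, ?_⟩
  · refine le_antisymm (Real.sSup_le hub (by positivity)) (le_of_forall_lt fun c hc => ?_)
    have h1 : ∀ᶠ ε in nhdsWithin (0:ℝ) (Set.Ioi 0),
        c < ∫ x, (max (x - t) 0) ^ 2 ∂(P3 μ σ ε) :=
      (part2 μ σ t hσ ht).eventually (eventually_gt_nhds hc)
    have h2 : Set.Ioo (0:ℝ) (1/2) ∈ nhdsWithin (0:ℝ) (Set.Ioi 0) :=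
      Ioo_mem_nhdsGT_of_mem ⟨le_rfl, by norm_num⟩
    obtain ⟨ε, hε1, hε2⟩ := (h1.and (Filter.eventually_mem_set.mpr h2)).exists
    exact lt_of_lt_of_le hε1 (le_csSup hbdd (P3_mem μ σ t hσ ht hε2.1 hε2.2))
  · intro h
    exact absurd (key_lt μ σ t hσ ht _ h) (lt_irrefl _)
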